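/- arXiv:2412.06420 — 8 statements merged into one kernel-verified Lean document; each statement's English description precedes it below -/
import Mathlib

section
/- If an accuracy measure is strictly proper, then it is strictly truth-directed: for credences x, y in [0,1], if v < x < y or y < x < v (with v ∈ {0,1}), then acc_v(x) > acc_v(y). In particular, acc_1 is strictly increasing and acc_0 is strictly decreasing on [0,1]. -/
/-- Strict propriety entails strict truth-directedness. -/
theorem strictly_proper_implies_truth_directed
    (acc0 acc1 : ℝ → ℝ)
    (hprop : ∀ p ∈ Set.Icc (0:ℝ) 1, ∀ x ∈ Set.Icc (0:ℝ) 1, x ≠ p →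
      p * acc1 x + (1 - p) * acc0 x < p * acc1 p + (1 - p) * acc0 p) :
    (∀ x ∈ Set.Icc (0:ℝ) 1, ∀ y ∈ Set.Icc (0:ℝ) 1,
      (0 < x ∧ x < y) → acc0 x > acc0 y) ∧
    (∀ x ∈ Set.Icc (0:ℝ) 1, ∀ y ∈ Set.Icc (0:ℝ) 1,
      (y < x ∧ x < 1) → acc1 x > acc1 y) ∧
    StrictMonoOn acc1 (Set.Icc (0:ℝ) 1) ∧
    StrictAntiOn acc0 (Set.Icc (0:ℝ) 1) := by
  have h0 : ∀ x ∈ Set.Icc (0:ℝ) 1, ∀ y ∈ Set.Icc (0:ℝ) 1,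
      (0 < x ∧ x < y) → acc0 x > acc0 y := by
    intro x hx y hy ⟨hx0, hxy⟩
    have A := hprop x hx y hy (ne_of_gt hxy)
    have B := hprop y hy x hx (ne_of_lt hxy)
    nlinarith [mul_pos hx0 (sub_pos.mpr B), mul_pos (hx0.trans hxy) (sub_pos.mpr A)]
  have h1 : ∀ x ∈ Set.Icc (0:ℝ) 1, ∀ y ∈ Set.Icc (0:ℝ) 1,
      (y < x ∧ x < 1) → acc1 x > acc1 y := by
    intro x hx y hy ⟨hyx, hx1⟩
    have A := hprop x hx y hy (ne_of_lt hyx)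
    have B := hprop y hy x hx (ne_of_gt hyx)
    have hy1 : y < 1 := hyx.trans hx1
    nlinarith [mul_pos (sub_pos.mpr hx1) (sub_pos.mpr B),
      mul_pos (sub_pos.mpr hy1) (sub_pos.mpr A)]
  refine ⟨h0, h1, ?_, ?_⟩
  · intro x hx y hy hxy
    rcases lt_or_eq_of_le hy.2 with hy1 | hy1
    · exact h1 y hy x hx ⟨hxy, hy1⟩
    · subst hy1
      have := hprop 1 (by norm_num) x hx (ne_of_lt hxy)
      linarith
  · intro x hx y hy hxy
    rcases lt_or_eq_of_le hx.1 with hx0 | hx0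
    · exact h0 x hx y hy ⟨hx0, hxy⟩
    · subst hx0
      have := hprop 0 (by norm_num) y hy (ne_of_gt hxy)
      linarith
end

section
/- If there exists a nonnegative continuous function m : [0,1] → ℝ such that acc_1(x) = acc_1(1) - ∫_x^1 (1-t)·m(t) dt and acc_0(x) = acc_0(0) - ∫_0^x t·m(t) dt for all x ∈ [0,1], then acc is proper: for every p ∈ [0,1], Exp_p(acc)(x) := p·acc_1(x) + (1-p)·acc_0(x) is maximised at x = p. If moreover m is strictly positive, the maximum is unique (strict propriety). -/
/-- The Schervish integral form entails (strict) propriety. -/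
theorem schervish_form_implies_proper
    (acc0 acc1 m : ℝ → ℝ)
    (hm_cont : ContinuousOn m (Set.Icc (0:ℝ) 1))
    (hm_nonneg : ∀ t ∈ Set.Icc (0:ℝ) 1, 0 ≤ m t)
    (h1 : ∀ x ∈ Set.Icc (0:ℝ) 1, acc1 x = acc1 1 - ∫ t in x..(1:ℝ), (1 - t) * m t)
    (h0 : ∀ x ∈ Set.Icc (0:ℝ) 1, acc0 x = acc0 0 - ∫ t in (0:ℝ)..x, t * m t) :
    (∀ p ∈ Set.Icc (0:ℝ) 1, ∀ x ∈ Set.Icc (0:ℝ) 1,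
      p * acc1 x + (1 - p) * acc0 x ≤ p * acc1 p + (1 - p) * acc0 p) ∧
    ((∀ t ∈ Set.Icc (0:ℝ) 1, 0 < m t) →
      ∀ p ∈ Set.Icc (0:ℝ) 1, ∀ x ∈ Set.Icc (0:ℝ) 1, x ≠ p →
        p * acc1 x + (1 - p) * acc0 x < p * acc1 p + (1 - p) * acc0 p) := by
  -- integrability helper
  have hint : ∀ (c : ℝ → ℝ), Continuous c → ∀ a ∈ Set.Icc (0:ℝ) 1, ∀ b ∈ Set.Icc (0:ℝ) 1,
      IntervalIntegrable (fun t => c t * m t) MeasureTheory.volume a b := by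
    intro c hc a ha b hb
    apply ContinuousOn.intervalIntegrable
    exact (hc.continuousOn.mul (hm_cont.mono (Set.uIcc_subset_Icc ha hb)))
  -- the key identity
  have key : ∀ p ∈ Set.Icc (0:ℝ) 1, ∀ x ∈ Set.Icc (0:ℝ) 1,
      p * acc1 x + (1 - p) * acc0 x - (p * acc1 p + (1 - p) * acc0 p)
        = ∫ t in p..x, (p - t) * m t := by
    intro p hp x hx
    have h1mem : (1:ℝ) ∈ Set.Icc (0:ℝ) 1 := by norm_num
    have h0mem : (0:ℝ) ∈ Set.Icc (0:ℝ) 1 := by norm_num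
    have e1 : (∫ t in p..x, (1 - t) * m t) + ∫ t in x..(1:ℝ), (1 - t) * m t
        = ∫ t in p..(1:ℝ), (1 - t) * m t :=
      intervalIntegral.integral_add_adjacent_intervals
        (hint (fun t => 1 - t) (continuous_const.sub continuous_id) p hp x hx) (hint (fun t => 1 - t) (continuous_const.sub continuous_id) x hx 1 h1mem)
    have e0 : (∫ t in (0:ℝ)..p, t * m t) + ∫ t in p..x, t * m t
        = ∫ t in (0:ℝ)..x, t * m t :=
      intervalIntegral.integral_add_adjacent_intervals
        (hint (fun t => t) continuous_id 0 h0mem p hp) (hint (fun t => t) continuous_id p hp x hx)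
    rw [h1 x hx, h1 p hp, h0 x hx, h0 p hp, ← e1, ← e0]
    have e2 : ∫ t in p..x, (p - t) * m t
        = (∫ t in p..x, p * ((1 - t) * m t)) - ∫ t in p..x, (1 - p) * (t * m t) := by
      rw [← intervalIntegral.integral_sub
        ((hint (fun t => 1 - t) (continuous_const.sub continuous_id) p hp x hx).const_mul p)
        ((hint (fun t => t) continuous_id p hp x hx).const_mul (1 - p))]
      congr 1; funext t; ring
    rw [e2, intervalIntegral.integral_const_mul, intervalIntegral.integral_const_mul]
    ring
  have hle : ∀ p ∈ Set.Icc (0:ℝ) 1, ∀ x ∈ Set.Icc (0:ℝ) 1,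
      (∫ t in p..x, (p - t) * m t) ≤ 0 := by
    intro p hp x hx
    rcases le_total p x with h | h
    · have heq : (∫ t in p..x, (p - t) * m t) = - ∫ t in p..x, (t - p) * m t := by
        rw [← intervalIntegral.integral_neg]; congr 1; funext t; ring
      rw [heq]
      have : (0:ℝ) ≤ ∫ t in p..x, (t - p) * m t := by
        apply intervalIntegral.integral_nonneg h
        intro u hu
        have hu01 : u ∈ Set.Icc (0:ℝ) 1 :=
          ⟨le_trans hp.1 hu.1, le_trans hu.2 hx.2⟩
        exact mul_nonneg (by linarith [hu.1]) (hm_nonneg u hu01)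
      linarith
    · rw [intervalIntegral.integral_symm x p]
      have : (0:ℝ) ≤ ∫ t in x..p, (p - t) * m t := by
        apply intervalIntegral.integral_nonneg h
        intro u hu
        have hu01 : u ∈ Set.Icc (0:ℝ) 1 :=
          ⟨le_trans hx.1 hu.1, le_trans hu.2 hp.2⟩
        exact mul_nonneg (by linarith [hu.2]) (hm_nonneg u hu01)
      linarith
  have hlt : (∀ t ∈ Set.Icc (0:ℝ) 1, 0 < m t) →
      ∀ p ∈ Set.Icc (0:ℝ) 1, ∀ x ∈ Set.Icc (0:ℝ) 1, x ≠ p →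
      (∫ t in p..x, (p - t) * m t) < 0 := by
    intro hpos p hp x hx hne
    rcases lt_or_gt_of_ne hne with h | h
    · -- x < p
      rw [intervalIntegral.integral_symm x p]
      have : (0:ℝ) < ∫ t in x..p, (p - t) * m t := by
        apply intervalIntegral.intervalIntegral_pos_of_pos_on
          (hint (fun t => p - t) (continuous_const.sub continuous_id) x hx p hp)
        · intro u hu
          have hu01 : u ∈ Set.Icc (0:ℝ) 1 :=
            ⟨le_trans hx.1 hu.1.le, le_trans hu.2.le hp.2⟩
          exact mul_pos (show (0:ℝ) < p - u by linarith [hu.2]) (hpos u hu01)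
        · exact h
      linarith
    · -- p < x
      have heq : (∫ t in p..x, (p - t) * m t) = - ∫ t in p..x, (t - p) * m t := by
        rw [← intervalIntegral.integral_neg]; congr 1; funext t; ring
      rw [heq]
      have : (0:ℝ) < ∫ t in p..x, (t - p) * m t := by
        apply intervalIntegral.intervalIntegral_pos_of_pos_on
          (hint (fun t => t - p) (continuous_id.sub continuous_const) p hp x hx)
        · intro u hu
          have hu01 : u ∈ Set.Icc (0:ℝ) 1 :=
            ⟨le_trans hp.1 hu.1.le, le_trans hu.2.le hx.2⟩
          exact mul_pos (show (0:ℝ) < u - p by linarith [hu.1]) (hpos u hu01)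
        · exact h
      linarith
  constructor
  · intro p hp x hx
    have := key p hp x hx
    have := hle p hp x hx
    linarith
  · intro hpos p hp x hx hne
    have := key p hp x hx
    have := hlt hpos p hp x hx hne
    linarith
end

section
/- Let φ : ℝ → ℝ be convex and differentiable, and define acc_v(x) := φ(x) + (v - x)·φ'(x) for v ∈ {0,1} and x ∈ [0,1]. Then acc is proper: for every p ∈ [0,1], x ↦ p·acc_1(x) + (1-p)·acc_0(x) is maximised at x = p. If φ is strictly convex, the maximum is unique. -/
lemma tangent_le_aux (φ : ℝ → ℝ) (hconv : ConvexOn ℝ Set.univ φ)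
    (hdiff : Differentiable ℝ φ) (x p : ℝ) :
    φ x + (p - x) * deriv φ x ≤ φ p := by
  rcases lt_trichotomy x p with h | h | h
  · have := hconv.deriv_le_slope (Set.mem_univ x) (Set.mem_univ p) h (hdiff x)
    rw [slope_def_field, le_div_iff₀ (by linarith : (0:ℝ) < p - x)] at this
    linarith
  · simp [h]
  · have := hconv.slope_le_deriv (Set.mem_univ p) (Set.mem_univ x) h (hdiff x)
    rw [slope_def_field, div_le_iff₀ (by linarith : (0:ℝ) < x - p)] at this
    linarith

lemma tangent_lt_aux (φ : ℝ → ℝ) (hconv : StrictConvexOn ℝ Set.univ φ)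
    (hdiff : Differentiable ℝ φ) (x p : ℝ) (hne : x ≠ p) :
    φ x + (p - x) * deriv φ x < φ p := by
  rcases lt_or_gt_of_ne hne with h | h
  · have := hconv.deriv_lt_slope (Set.mem_univ x) (Set.mem_univ p) h (hdiff x)
    rw [slope_def_field, lt_div_iff₀ (by linarith : (0:ℝ) < p - x)] at this
    linarith
  · have := hconv.slope_lt_deriv (Set.mem_univ p) (Set.mem_univ x) h (hdiff x)
    rw [slope_def_field, div_lt_iff₀ (by linarith : (0:ℝ) < x - p)] at this
    linarith

/-- Accuracy measures defined from a convex differentiable function via the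
Bregman form are proper, and strictly proper when the function is strictly convex. -/
theorem bregman_form_implies_proper
    (φ : ℝ → ℝ)
    (hconv : ConvexOn ℝ Set.univ φ)
    (hdiff : Differentiable ℝ φ) :
    (∀ p ∈ Set.Icc (0:ℝ) 1, ∀ x ∈ Set.Icc (0:ℝ) 1,
      p * (φ x + (1 - x) * deriv φ x) + (1 - p) * (φ x + (0 - x) * deriv φ x)
        ≤ p * (φ p + (1 - p) * deriv φ p) + (1 - p) * (φ p + (0 - p) * deriv φ p)) ∧
    (StrictConvexOn ℝ Set.univ φ →
      ∀ p ∈ Set.Icc (0:ℝ) 1, ∀ x ∈ Set.Icc (0:ℝ) 1, x ≠ p →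
        p * (φ x + (1 - x) * deriv φ x) + (1 - p) * (φ x + (0 - x) * deriv φ x)
          < p * (φ p + (1 - p) * deriv φ p) + (1 - p) * (φ p + (0 - p) * deriv φ p)) := by
  constructor
  · intro p _ x _
    have h := tangent_le_aux φ hconv hdiff x p
    nlinarith [h]
  · intro hs p _ x _ hne
    have h := tangent_lt_aux φ hs hdiff x p hne
    nlinarith [h]
end

section
/- (Schervish form implies propriety for estimates.) Let acc : ℝ × ℝ → ℝ with acc_k(x) = acc_k(k) - ∫_x^k (k - t)·m(t) dt for a nonnegative locally integrable m. Let Ω be a finite sample space, V : Ω → ℝ a random variable, p a probability mass function on Ω, and e := Σ_ω p(ω)·V(ω). Then for every x, Σ_ω p(ω)·acc_{V(ω)}(e) - Σ_ω p(ω)·acc_{V(ω)}(x) = ∫_x^e (e - t)·m(t) dt ≥ 0; hence x ↦ Σ_ω p(ω)·acc_{V(ω)}(x) is maximised at x = e. If m is strictly positive, the maximiser is unique. -/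
open MeasureTheory intervalIntegral

/-- The Schervish form for estimates entails (strict) propriety. -/
theorem schervish_form_implies_proper_estimates
    (acc : ℝ → ℝ → ℝ) (m : ℝ → ℝ)
    (hm_nonneg : ∀ t, 0 ≤ m t)
    (hm_int : ∀ a b : ℝ, IntervalIntegrable m MeasureTheory.volume a b)
    (hacc : ∀ k x : ℝ, acc k x = acc k k - ∫ t in x..k, (k - t) * m t)
    (Ω : Type) [Fintype Ω] (V : Ω → ℝ) (p : Ω → ℝ)
    (hp : ∀ ω, 0 ≤ p ω) (hp1 : ∑ ω, p ω = 1) :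
    (∀ x : ℝ,
      (∑ ω, p ω * acc (V ω) (∑ ω, p ω * V ω)) - (∑ ω, p ω * acc (V ω) x)
        = ∫ t in x..(∑ ω, p ω * V ω), ((∑ ω, p ω * V ω) - t) * m t) ∧
    (∀ x : ℝ,
      ∑ ω, p ω * acc (V ω) x ≤ ∑ ω, p ω * acc (V ω) (∑ ω, p ω * V ω)) ∧
    ((∀ t, 0 < m t) → ∀ x : ℝ, x ≠ ∑ ω, p ω * V ω →
      ∑ ω, p ω * acc (V ω) x < ∑ ω, p ω * acc (V ω) (∑ ω, p ω * V ω)) := by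
  set e : ℝ := ∑ ω, p ω * V ω with he
  have hint : ∀ c a b : ℝ, IntervalIntegrable (fun t => (c - t) * m t) volume a b := by
    intro c a b
    exact (hm_int a b).continuousOn_mul (by fun_prop)
  have key : ∀ x : ℝ,
      (∑ ω, p ω * acc (V ω) e) - (∑ ω, p ω * acc (V ω) x)
        = ∫ t in x..e, (e - t) * m t := by
    intro x
    have step : ∀ k : ℝ, acc k e - acc k x = ∫ t in x..e, (k - t) * m t := by
      intro k
      rw [hacc k e, hacc k x]
      have := intervalIntegral.integral_add_adjacent_intervals (hint k x e) (hint k e k)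
      linarith [this]
    calc (∑ ω, p ω * acc (V ω) e) - (∑ ω, p ω * acc (V ω) x)
        = ∑ ω, p ω * (acc (V ω) e - acc (V ω) x) := by
          rw [← Finset.sum_sub_distrib]; congr 1; ext ω; ring
      _ = ∑ ω, p ω * ∫ t in x..e, (V ω - t) * m t := by
          congr 1; ext ω; rw [step]
      _ = ∑ ω, ∫ t in x..e, p ω * ((V ω - t) * m t) := by
          congr 1; ext ω; rw [intervalIntegral.integral_const_mul]
      _ = ∫ t in x..e, ∑ ω, p ω * ((V ω - t) * m t) := by
          rw [intervalIntegral.integral_finset_sum]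
          intro ω _
          exact (hint (V ω) x e).const_mul _
      _ = ∫ t in x..e, (e - t) * m t := by
          congr 1; ext t
          have : ∑ ω, p ω * ((V ω - t) * m t)
              = (∑ ω, p ω * V ω) * m t - (∑ ω, p ω) * (t * m t) := by
            rw [Finset.sum_mul, Finset.sum_mul, ← Finset.sum_sub_distrib]
            congr 1; ext ω; ring
          rw [this, hp1, ← he]; ring
  have hnn : ∀ x : ℝ, 0 ≤ ∫ t in x..e, (e - t) * m t := by
    intro x
    rcases le_or_gt x e with h | h
    · apply intervalIntegral.integral_nonneg h
      intro t ht
      exact mul_nonneg (by linarith [ht.2]) (hm_nonneg t)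
    · rw [intervalIntegral.integral_symm]
      have : (∫ t in e..x, (e - t) * m t) ≤ 0 := by
        rw [← neg_nonneg, ← intervalIntegral.integral_neg]
        apply intervalIntegral.integral_nonneg h.le
        intro t ht
        have : 0 ≤ (t - e) * m t := mul_nonneg (by linarith [ht.1]) (hm_nonneg t)
        nlinarith
      linarith
  refine ⟨key, fun x => by linarith [key x, hnn x], ?_⟩
  intro hpos x hne
  have hlt : 0 < ∫ t in x..e, (e - t) * m t := by
    rcases lt_or_gt_of_ne hne with h | h
    · apply intervalIntegral.intervalIntegral_pos_of_pos_on (hint e x e) _ h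
      intro t ht
      exact mul_pos (by linarith [ht.2]) (hpos t)
    · rw [intervalIntegral.integral_symm]
      have : 0 < ∫ t in e..x, -((e - t) * m t) := by
        apply intervalIntegral.intervalIntegral_pos_of_pos_on ((hint e e x).neg) _ h
        intro t ht
        show 0 < -((e - t) * m t)
        have := mul_pos (sub_pos.mpr ht.1) (hpos t)
        nlinarith
      rw [intervalIntegral.integral_neg] at this
      linarith
  linarith [key x]
end

section
/- (Propriety entails value-directedness.) Let V : Ω → ℝ with r, k ∈ range(V), r ≠ k, and let acc be strictly proper for V on finitely supported probabilities. Then for a, b, e between r and k with e ≤ b < a or a < b ≤ e, we have acc_e is strictly better at b than at a in the sense that Exp over the two-point distribution at e satisfies: moving the estimate from a toward e (to b) strictly increases accuracy, i.e., acc_e(b) > acc_e(a). -/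
/-- Key arithmetic lemma extracted from the two propriety inequalities. -/
lemma aux_value_directed (u v s t a b e k : ℝ)
    (h1 : (k - a) * v + (a - e) * t < (k - a) * u + (a - e) * s)
    (h2 : (k - b) * u + (b - e) * s < (k - b) * v + (b - e) * t)
    (hbe : e ≤ b) (hbk : b ≤ k) (hba : b < a) : u < v := by
  have h3 : 0 < (a - b) * ((v - u) - (t - s)) := by nlinarith [h1, h2]
  have h4 : 0 < (v - u) - (t - s) := by
    rcases mul_pos_iff.mp h3 with ⟨_, h⟩ | ⟨h, _⟩
    · exact h
    · linarith
  by_contra hg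
  push_neg at hg
  nlinarith [h2, mul_nonneg (sub_nonneg.mpr hbe) h4.le,
    mul_nonneg (sub_nonneg.mpr hbk) (sub_nonneg.mpr hg),
    mul_nonneg (sub_nonneg.mpr hbe) (sub_nonneg.mpr hg)]

/-- Strict propriety for estimates entails strict value-directedness. -/
theorem proper_implies_value_directed
    (Ω : Type) [Fintype Ω] (V : Ω → ℝ) (acc : ℝ → ℝ → ℝ)
    (r k : ℝ) (hr : r ∈ Set.range V) (hk : k ∈ Set.range V) (hrk : r ≠ k)
    (hprop : ∀ p : Ω → ℝ, (∀ ω, 0 ≤ p ω) → (∑ ω, p ω = 1) →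
      ∀ x : ℝ, x ≠ ∑ ω, p ω * V ω →
        ∑ ω, p ω * acc (V ω) x < ∑ ω, p ω * acc (V ω) (∑ ω, p ω * V ω)) :
    ∀ e ∈ ({r, k} : Set ℝ), ∀ a ∈ Set.uIcc r k, ∀ b ∈ Set.uIcc r k,
      ((e ≤ b ∧ b < a) ∨ (a < b ∧ b ≤ e)) → acc e b > acc e a := by
  obtain ⟨ωr, hωr⟩ := hr
  obtain ⟨ωk, hωk⟩ := hk
  have hne : ωr ≠ ωk := by
    intro h; apply hrk; rw [← hωr, ← hωk, h]
  classical
  have hd : k - r ≠ 0 := sub_ne_zero.mpr (Ne.symm hrk)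
  set p : ℝ → Ω → ℝ := fun x ω =>
    if ω = ωr then (k - x) / (k - r) else if ω = ωk then (x - r) / (k - r) else 0 with hp
  -- sum formula
  have hsum : ∀ (x : ℝ) (h : Ω → ℝ),
      ∑ ω, p x ω * h ω = ((k - x) * h ωr + (x - r) * h ωk) / (k - r) := by
    intro x h
    have key : ∀ ω, p x ω * h ω =
        (if ω = ωr then (k - x) / (k - r) * h ωr else 0)
        + (if ω = ωk then (x - r) / (k - r) * h ωk else 0) := by
      intro ω
      simp only [hp]
      by_cases h1 : ω = ωr
      · subst h1; simp [hne]
      · by_cases h2 : ω = ωk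
        · subst h2; simp [h1]
        · simp [h1, h2]
    rw [Finset.sum_congr rfl fun ω _ => key ω, Finset.sum_add_distrib]
    simp [Finset.sum_ite_eq', ← add_div]
    ring
  have hsum1 : ∀ x : ℝ, ∑ ω, p x ω = 1 := by
    intro x
    have := hsum x (fun _ => 1)
    simp only [mul_one] at this
    rw [this]
    field_simp; ring
  have hmean : ∀ x : ℝ, ∑ ω, p x ω * V ω = x := by
    intro x
    rw [hsum x V, hωr, hωk]
    field_simp; ring
  have hnonneg : ∀ x ∈ Set.uIcc r k, ∀ ω, 0 ≤ p x ω := by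
    intro x hx ω
    rcases lt_or_gt_of_ne hrk with h | h
    · rw [Set.uIcc_of_le h.le] at hx
      simp only [hp]
      split_ifs
      · exact div_nonneg (by linarith [hx.2]) (by linarith)
      · exact div_nonneg (by linarith [hx.1]) (by linarith)
      · exact le_rfl
    · rw [Set.uIcc_of_ge h.le] at hx
      simp only [hp]
      split_ifs
      · exact div_nonneg_of_nonpos (by linarith [hx.1]) (by linarith)
      · exact div_nonneg_of_nonpos (by linarith [hx.2]) (by linarith)
      · exact le_rfl
  intro e he a ha b hb hcase
  have hba : b ≠ a := by rcases hcase with ⟨_, h⟩ | ⟨h, _⟩; exacts [h.ne, h.ne']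
  have H1 := hprop (p a) (hnonneg a ha) (hsum1 a) b (by rw [hmean]; exact hba)
  have H2 := hprop (p b) (hnonneg b hb) (hsum1 b) a (by rw [hmean]; exact hba.symm)
  rw [hmean, hsum a (fun ω => acc (V ω) b), hsum a (fun ω => acc (V ω) a)] at H1
  rw [hmean, hsum b (fun ω => acc (V ω) a), hsum b (fun ω => acc (V ω) b)] at H2
  rw [hωr, hωk] at H1 H2
  simp only [Set.mem_insert_iff, Set.mem_singleton_iff] at he
  rcases lt_or_gt_of_ne hrk with hlt | hlt
  · have h1 := (div_lt_div_iff_of_pos_right (by linarith : (0:ℝ) < k - r)).mp H1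
    have h2 := (div_lt_div_iff_of_pos_right (by linarith : (0:ℝ) < k - r)).mp H2
    rw [Set.uIcc_of_le hlt.le] at ha hb
    rcases he with rfl | rfl
    · rcases hcase with ⟨heb, hba'⟩ | ⟨hab', hbe⟩
      · exact aux_value_directed (acc e a) (acc e b) (acc k a) (acc k b) a b e k
          h1 h2 heb hb.2 hba'
      · linarith [ha.1]
    · rcases hcase with ⟨heb, hba'⟩ | ⟨hab', hbe⟩
      · linarith [ha.2]
      · exact aux_value_directed (acc e a) (acc e b) (acc r a) (acc r b) (-a) (-b) (-e) (-r)
          (by nlinarith [h1]) (by nlinarith [h2]) (by linarith) (by linarith [hb.1]) (by linarith)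
  · have h1 := (div_lt_div_right_of_neg (by linarith : k - r < 0)).mp H1
    have h2 := (div_lt_div_right_of_neg (by linarith : k - r < 0)).mp H2
    rw [Set.uIcc_of_ge hlt.le] at ha hb
    rcases he with rfl | rfl
    · rcases hcase with ⟨heb, hba'⟩ | ⟨hab', hbe⟩
      · linarith [ha.2]
      · exact aux_value_directed (acc e a) (acc e b) (acc k a) (acc k b) (-a) (-b) (-e) (-k)
          (by nlinarith [h1]) (by nlinarith [h2]) (by linarith) (by linarith [hb.1]) (by linarith)
    · rcases hcase with ⟨heb, hba'⟩ | ⟨hab', hbe⟩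
      · exact aux_value_directed (acc e a) (acc e b) (acc r a) (acc r b) a b e r
          (by nlinarith [h1]) (by nlinarith [h2]) heb hb.2 hba'
      · linarith [ha.1]
end

section
/- (Two-point first-order condition.) Let acc_k, acc_r : ℝ → ℝ be differentiable with k < r, and suppose for every t ∈ [k, r] the function x ↦ ((t-k)/(r-k))·acc_r(x) + ((r-t)/(r-k))·acc_k(x) is maximised (over [k,r]) at x = t. Then for all t ∈ (k, r): (t-k)·acc_r'(t) + (r-t)·acc_k'(t) = 0, equivalently acc_r'(t)/(r - t) = acc_k'(t)/(k - t). -/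
/-- The two-point first-order condition. -/
theorem two_point_first_order_condition
    (acck accr : ℝ → ℝ) (k r : ℝ) (hkr : k < r)
    (hdk : Differentiable ℝ acck) (hdr : Differentiable ℝ accr)
    (hmax : ∀ t ∈ Set.Icc k r, ∀ x ∈ Set.Icc k r,
      ((t - k) / (r - k)) * accr x + ((r - t) / (r - k)) * acck x
        ≤ ((t - k) / (r - k)) * accr t + ((r - t) / (r - k)) * acck t) :
    ∀ t ∈ Set.Ioo k r,
      (t - k) * deriv accr t + (r - t) * deriv acck t = 0 ∧
      deriv accr t / (r - t) = deriv acck t / (k - t) := by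
  intro t ht
  have htIcc : t ∈ Set.Icc k r := Set.Ioo_subset_Icc_self ht
  set a := (t - k) / (r - k) with ha
  set b := (r - t) / (r - k) with hb
  have hfd : Differentiable ℝ (fun x => a * accr x + b * acck x) :=
    (hdr.const_mul a).add (hdk.const_mul b)
  have hloc : IsLocalMax (fun x => a * accr x + b * acck x) t := by
    have hnhds : Set.Icc k r ∈ nhds t :=
      Icc_mem_nhds ht.1 ht.2
    exact Filter.eventually_of_mem hnhds (fun x hx => hmax t htIcc x hx)
  have hderiv0 : deriv (fun x => a * accr x + b * acck x) t = 0 :=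
    hloc.deriv_eq_zero
  have hcalc : deriv (fun x => a * accr x + b * acck x) t
      = a * deriv accr t + b * deriv acck t := by
    rw [deriv_fun_add ((hdr t).const_mul a) ((hdk t).const_mul b),
      deriv_const_mul a (hdr t), deriv_const_mul b (hdk t)]
  have hsum : a * deriv accr t + b * deriv acck t = 0 := hcalc ▸ hderiv0
  have hrk : r - k ≠ 0 := sub_ne_zero.mpr hkr.ne'
  have h1 : (t - k) * deriv accr t + (r - t) * deriv acck t = 0 := by
    have := congrArg (fun z => (r - k) * z) hsum
    simp only [mul_zero] at this
    rw [← this]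
    field_simp [ha, hb]
    rw [ha, hb]
    field_simp
  refine ⟨h1, ?_⟩
  rw [div_eq_div_iff (sub_ne_zero.mpr ht.2.ne') (sub_ne_zero.mpr ht.1.ne)]
  linarith
end

section
/- (Bregman characterisation for estimates, sufficiency.) Let φ : ℝ → ℝ be strictly convex and differentiable, and define acc_v(x) := acc_v(v) - [φ(v) - φ(x) - (v - x)·φ'(x)] for arbitrary fixed constants acc_v(v). Then acc is strictly proper for estimates: for every finite Ω, V : Ω → ℝ, and probability mass function p on Ω, the map x ↦ Σ_ω p(ω)·acc_{V(ω)}(x) is uniquely maximised at x = Σ_ω p(ω)·V(ω). -/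
lemma bregman_pos (φ : ℝ → ℝ) (hconv : StrictConvexOn ℝ Set.univ φ)
    (hdiff : Differentiable ℝ φ) (x μ : ℝ) (hne : x ≠ μ) :
    0 < φ μ - φ x - (μ - x) * deriv φ x := by
  rcases hne.lt_or_gt with h | h
  · have := hconv.deriv_lt_slope (Set.mem_univ x) (Set.mem_univ μ) h (hdiff x)
    rw [slope_def_field] at this; rw [lt_div_iff₀ (by linarith : (0:ℝ) < μ - x)] at this
    nlinarith [this]
  · have := hconv.slope_lt_deriv (Set.mem_univ μ) (Set.mem_univ x) h (hdiff x)
    rw [slope_def_field] at this; rw [div_lt_iff₀ (by linarith : (0:ℝ) < x - μ)] at this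
    nlinarith [this]

/-- The Bregman form with strictly convex entropy is strictly proper for estimates. -/
theorem bregman_form_strictly_proper_estimates
    (φ : ℝ → ℝ)
    (hconv : StrictConvexOn ℝ Set.univ φ)
    (hdiff : Differentiable ℝ φ)
    (c : ℝ → ℝ) (acc : ℝ → ℝ → ℝ)
    (hacc : ∀ v x : ℝ, acc v x = c v - (φ v - φ x - (v - x) * deriv φ x))
    (Ω : Type) [Fintype Ω] (V : Ω → ℝ) (p : Ω → ℝ)
    (hp : ∀ ω, 0 ≤ p ω) (hp1 : ∑ ω, p ω = 1) :
    ∀ x : ℝ, x ≠ ∑ ω, p ω * V ω →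
      ∑ ω, p ω * acc (V ω) x < ∑ ω, p ω * acc (V ω) (∑ ω, p ω * V ω) := by
  intro x hx
  set μ := ∑ ω, p ω * V ω with hμ
  have key : ∀ y : ℝ, ∑ ω, p ω * acc (V ω) y
      = (∑ ω, p ω * (c (V ω) - φ (V ω))) + φ y + (μ - y) * deriv φ y := by
    intro y
    have : ∀ ω, p ω * acc (V ω) y
        = p ω * (c (V ω) - φ (V ω)) + p ω * φ y + (p ω * V ω - p ω * y) * deriv φ y := by
      intro ω; rw [hacc]; ring
    rw [Finset.sum_congr rfl (fun ω _ => this ω)]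
    rw [Finset.sum_add_distrib, Finset.sum_add_distrib, ← Finset.sum_mul, hp1,
      ← Finset.sum_mul, Finset.sum_sub_distrib, ← Finset.sum_mul, hp1, ← hμ]
    ring
  rw [key x, key μ]
  have := bregman_pos φ hconv hdiff x μ hx
  have h0 : (μ - μ) * deriv φ μ = 0 := by ring
  linarith [this]
end

section
/- (Bregman expectation identity for estimates.) Suppose acc_v(x) = acc_v(v) - [φ(v) - φ(x) - (v - x)·φ'(x)] for a differentiable φ : ℝ → ℝ, all v, x ∈ ℝ. Then for any finite Ω, V : Ω → ℝ, probability mass function p, and e := Σ_ω p(ω)·V(ω): Σ_ω p(ω)·acc_{V(ω)}(e) - Σ_ω p(ω)·acc_{V(ω)}(x) = φ(e) - φ(x) - (e - x)·φ'(x) for all x ∈ ℝ. -/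
/-- The Bregman expectation identity for estimates. -/
theorem bregman_expectation_identity
    (φ : ℝ → ℝ) (hdiff : Differentiable ℝ φ)
    (c : ℝ → ℝ) (acc : ℝ → ℝ → ℝ)
    (hacc : ∀ v x : ℝ, acc v x = c v - (φ v - φ x - (v - x) * deriv φ x))
    (Ω : Type) [Fintype Ω] (V : Ω → ℝ) (p : Ω → ℝ)
    (hp : ∀ ω, 0 ≤ p ω) (hp1 : ∑ ω, p ω = 1) :
    ∀ x : ℝ,
      (∑ ω, p ω * acc (V ω) (∑ ω, p ω * V ω)) - (∑ ω, p ω * acc (V ω) x)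
        = φ (∑ ω, p ω * V ω) - φ x - ((∑ ω, p ω * V ω) - x) * deriv φ x := by
  have key : ∀ y : ℝ, (∑ ω, p ω * acc (V ω) y)
      = (∑ ω, p ω * (c (V ω) - φ (V ω))) + φ y
        + ((∑ ω, p ω * V ω) - y) * deriv φ y := by
    intro y
    have h : ∀ ω, p ω * acc (V ω) y
        = p ω * (c (V ω) - φ (V ω)) + p ω * φ y
          + p ω * V ω * deriv φ y - p ω * (y * deriv φ y) := by
      intro ω; rw [hacc]; ring
    calc (∑ ω, p ω * acc (V ω) y)
        = ∑ ω, (p ω * (c (V ω) - φ (V ω)) + p ω * φ y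
            + p ω * V ω * deriv φ y - p ω * (y * deriv φ y)) :=
          Finset.sum_congr rfl (fun ω _ => h ω)
      _ = (∑ ω, p ω * (c (V ω) - φ (V ω))) + (∑ ω, p ω) * φ y
            + (∑ ω, p ω * V ω) * deriv φ y - (∑ ω, p ω) * (y * deriv φ y) := by
          simp [Finset.sum_add_distrib, Finset.sum_sub_distrib, Finset.sum_mul]
      _ = _ := by rw [hp1]; ring
  intro x
  rw [key, key]; ring
end
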